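/- arXiv:2008.03556 — 3 statements merged into one kernel-verified Lean document; each statement's English description precedes it below -/
import Mathlib

section
/- Let k be even, d ≤ n positive integers, and q = kd/2. Then ∑_{I ∈ [n]^q} hist(I)! ≤ (k/2 + 1)^{kd/2} · n^{kd/2}. -/
open Finset

/-- `histFact I` is `hist(I)! = ∏ i (hist(I)_i)!`, the product of factorials of the
multiplicities of the symbols appearing in the tuple `I ∈ [n]^q`. -/
def histFact {n q : ℕ} (I : Fin q → Fin n) : ℕ :=
  ∏ i : Fin n, (Finset.univ.filter (fun j => I j = i)).card.factorial

lemma histFact_cons {n q : ℕ} (c : Fin n) (I : Fin q → Fin n) :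
    histFact (Fin.cons c I) = ((univ.filter (fun j => I j = c)).card + 1) * histFact I := by
  unfold histFact
  have hcard : ∀ i : Fin n,
      (univ.filter (fun j : Fin (q+1) => Fin.cons (α := fun _ => Fin n) c I j = i)).card
        = (if c = i then 1 else 0) + (univ.filter (fun j : Fin q => I j = i)).card := by
    intro i
    rw [Finset.card_filter, Finset.card_filter, Fin.sum_univ_succ]
    simp [Fin.cons]
    rw [Finset.card_filter]
    congr
  rw [← Finset.mul_prod_erase univ _ (mem_univ c),
      ← Finset.mul_prod_erase univ
        (fun i => (univ.filter (fun j : Fin q => I j = i)).card.factorial) (mem_univ c)]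
  rw [hcard c, if_pos rfl, Nat.add_comm 1, Nat.factorial_succ, mul_assoc]
  congr 1
  congr 1
  refine Finset.prod_congr rfl fun i hi => ?_
  rw [hcard i, if_neg (fun h => (Finset.mem_erase.mp hi).1 h.symm), Nat.zero_add]

lemma sum_histFact (n q : ℕ) :
    ∑ I : Fin q → Fin n, histFact I = Nat.ascFactorial n q := by
  induction q with
  | zero => simp [histFact, Nat.ascFactorial]
  | succ q ih =>
    rw [← (Fin.consEquiv (fun _ => Fin n)).sum_comp histFact, Fintype.sum_prod_type,
      Nat.ascFactorial_succ]
    have : ∀ c : Fin n, ∀ I : Fin q → Fin n,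
        histFact ((Fin.consEquiv (fun _ => Fin n)) (c, I))
          = ((univ.filter (fun j => I j = c)).card + 1) * histFact I := fun c I =>
      histFact_cons c I
    simp_rw [this]
    rw [Finset.sum_comm]
    have key : ∀ I : Fin q → Fin n,
        ∑ c : Fin n, ((univ.filter (fun j => I j = c)).card + 1) * histFact I
          = (n + q) * histFact I := by
      intro I
      rw [← Finset.sum_mul]
      congr 1
      rw [Finset.sum_add_distrib]
      rw [← Finset.card_eq_sum_card_fiberwise (f := I) (s := univ) (t := univ)
        (fun x _ => mem_univ _)]
      simp [add_comm]
    simp_rw [key]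
    rw [← Finset.mul_sum, ih]

lemma ascFactorial_le {n q M : ℕ} (h : ∀ j < q, n + j ≤ M) :
    Nat.ascFactorial n q ≤ M ^ q := by
  induction q with
  | zero => simp
  | succ q ih =>
    rw [Nat.ascFactorial_succ, pow_succ, mul_comm (M ^ q)]
    exact Nat.mul_le_mul (h q (Nat.lt_succ_self q))
      (ih fun j hj => h j (hj.trans (Nat.lt_succ_self q)))

/-- For `k` even and `1 ≤ d ≤ n`, `∑_{I ∈ [n]^{kd/2}} hist(I)! ≤ (k/2+1)^{kd/2} n^{kd/2}`. -/
theorem sum_histFact_le {n k d : ℕ} (hk : Even k) (hd : 0 < d) (hdn : d ≤ n) :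
    ∑ I : Fin (k * d / 2) → Fin n, histFact I ≤ (k / 2 + 1) ^ (k * d / 2) * n ^ (k * d / 2) := by
  obtain ⟨m, rfl⟩ := hk
  have hm : m + m = 2 * m := by ring
  have hq : (m + m) * d / 2 = m * d := by
    have : (m + m) * d = 2 * (m * d) := by ring
    rw [this, Nat.mul_div_cancel_left _ two_pos]
  have hk2 : (m + m) / 2 = m := by omega
  rw [sum_histFact, hq, hk2, ← mul_pow]
  apply ascFactorial_le
  intro j hj
  have : j < m * n := lt_of_lt_of_le hj (Nat.mul_le_mul_left m hdn)
  have hmn : (m + 1) * n = n + m * n := by ring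
  omega
end

section
/- Let k be even, d ≥ 1, and let R be an n^{kd/2} × n^{kd/2} matrix representation of f^d, i.e., f(x)^d = (x^{⊗kd/2})^T R x^{⊗kd/2} for all x ∈ ℝ^n. Let D be the diagonal matrix with D_{I,I} = √(hist(I)!) for I ∈ [n]^{kd/2}, and set N := D^{-1} R D^{-1}. Then for every x ∈ {±1}^n, |f(x)|^d ≤ ‖N‖ · ∑_{I ∈ [n]^{kd/2}} hist(I)!. -/
open Matrix

/-- The spectral (operator) norm of a real matrix. -/
noncomputable def specNorm {ι : Type*} [Fintype ι] [DecidableEq ι] (M : Matrix ι ι ℝ) : ℝ :=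
  ‖Matrix.toEuclideanCLM (𝕜 := ℝ) M‖

/-- The vector flattening of the `q`-fold tensor power of `x`. -/
def tensPow {n q : ℕ} (x : Fin n → ℝ) : (Fin q → Fin n) → ℝ :=
  fun I => ∏ t, x (I t)

/-- Re-scaled matrix representation certificate: if `R` represents `f^d` and
`N = D⁻¹ R D⁻¹` with `D = diag(√(hist(I)!))`, then for `x ∈ {±1}ⁿ`,
`|f(x)|^d ≤ ‖N‖ · ∑_I hist(I)!`. -/
theorem rescaled_certificate {n k d : ℕ} (hk : Even k) (hd : 1 ≤ d)
    (R : Matrix (Fin (k * d / 2) → Fin n) (Fin (k * d / 2) → Fin n) ℝ)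
    (f : (Fin n → ℝ) → ℝ)
    (hrep : ∀ x : Fin n → ℝ, (f x) ^ d = dotProduct (tensPow x) (R.mulVec (tensPow x)))
    (D : Matrix (Fin (k * d / 2) → Fin n) (Fin (k * d / 2) → Fin n) ℝ)
    (hD : D = Matrix.diagonal (fun I => Real.sqrt (histFact I)))
    (N : Matrix (Fin (k * d / 2) → Fin n) (Fin (k * d / 2) → Fin n) ℝ)
    (hN : N = D⁻¹ * R * D⁻¹) :
    ∀ x : Fin n → ℝ, (∀ i, x i = 1 ∨ x i = -1) →
      |f x| ^ d ≤ specNorm N * ∑ I : Fin (k * d / 2) → Fin n, (histFact I : ℝ) := by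
  intro x hx
  -- histFact is positive, so D is invertible
  have hpos : ∀ I : (Fin (k * d / 2) → Fin n), (0:ℝ) < Real.sqrt (histFact I) := by
    intro I
    apply Real.sqrt_pos.mpr
    exact_mod_cast Nat.pos_of_ne_zero (by
      simp only [histFact]
      exact Finset.prod_ne_zero_iff.mpr fun i _ => Nat.factorial_ne_zero _)
  have hdet : IsUnit D.det := by
    rw [hD, Matrix.det_diagonal]
    exact (Finset.prod_pos fun I _ => hpos I).ne'.isUnit
  have hR : R = D * N * D := by
    rw [hN]
    calc R = (D * D⁻¹) * R * (D⁻¹ * D) := by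
            rw [Matrix.mul_nonsing_inv _ hdet, Matrix.nonsing_inv_mul _ hdet,
              Matrix.one_mul, Matrix.mul_one]
      _ = D * (D⁻¹ * R * D⁻¹) * D := by noncomm_ring
  -- the rescaled vector
  set v : (Fin (k * d / 2) → Fin n) → ℝ := tensPow x with hv
  set w : (Fin (k * d / 2) → Fin n) → ℝ := D.mulVec v with hw
  have hvsq : ∀ I : (Fin (k * d / 2) → Fin n), v I ^ 2 = 1 := by
    intro I
    rw [hv, tensPow, ← Finset.prod_pow]
    apply Finset.prod_eq_one
    intro t _
    rcases hx (I t) with h | h <;> rw [h] <;> norm_num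
  have hwI : ∀ I : (Fin (k * d / 2) → Fin n), w I = Real.sqrt (histFact I) * v I := by
    intro I
    rw [hw, hD, Matrix.mulVec_diagonal]
  -- f(x)^d = wᵀ N w
  have key : (f x) ^ d = w ⬝ᵥ N.mulVec w := by
    rw [hrep x, ← hv, hR]
    rw [Matrix.mul_assoc, ← Matrix.mulVec_mulVec, ← Matrix.mulVec_mulVec,
      Matrix.dotProduct_mulVec]
    congr 1
    rw [hw, hD]
    ext I
    simp [Matrix.vecMul_diagonal, Matrix.mulVec_diagonal, mul_comm]
  -- Euclidean space bound
  set W : EuclideanSpace ℝ (Fin (k * d / 2) → Fin n) := (WithLp.equiv 2 ((Fin (k * d / 2) → Fin n) → ℝ)).symm w with hW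
  have hWnorm : ‖W‖ ^ 2 = ∑ I : (Fin (k * d / 2) → Fin n), (histFact I : ℝ) := by
    rw [EuclideanSpace.norm_eq, Real.sq_sqrt (Finset.sum_nonneg fun I _ => sq_nonneg _)]
    apply Finset.sum_congr rfl
    intro I _
    rw [Real.norm_eq_abs, sq_abs]
    show (w I) ^ 2 = _
    rw [hwI I, mul_pow, hvsq I, mul_one, Real.sq_sqrt (Nat.cast_nonneg _)]
  have hinner : w ⬝ᵥ N.mulVec w = inner ℝ W (Matrix.toEuclideanCLM (𝕜 := ℝ) N W) := by
    rw [hW, WithLp.equiv_symm_apply, Matrix.toEuclideanCLM_toLp]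
    rw [real_inner_comm]
    simp only [EuclideanSpace.inner_eq_star_dotProduct]
    simp [dotProduct, Matrix.mulVec, Matrix.toLin'_apply, dotProduct, mul_comm]
  have hbound : |w ⬝ᵥ N.mulVec w| ≤ specNorm N * ‖W‖ ^ 2 := by
    rw [hinner]
    calc |inner ℝ W (Matrix.toEuclideanCLM (𝕜 := ℝ) N W)|
        ≤ ‖W‖ * ‖Matrix.toEuclideanCLM (𝕜 := ℝ) N W‖ := abs_real_inner_le_norm _ _
      _ ≤ ‖W‖ * (specNorm N * ‖W‖) := by
          apply mul_le_mul_of_nonneg_left (ContinuousLinearMap.le_opNorm _ _) (norm_nonneg _)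
      _ = specNorm N * ‖W‖ ^ 2 := by ring
  calc |f x| ^ d = |(f x) ^ d| := (abs_pow _ _).symm
    _ = |w ⬝ᵥ N.mulVec w| := by rw [key]
    _ ≤ specNorm N * ‖W‖ ^ 2 := hbound
    _ = specNorm N * ∑ I : (Fin (k * d / 2) → Fin n), (histFact I : ℝ) := by rw [hWnorm]
end

section
/- Let k be even, d ≥ 1, Φ a k-XOR instance with m constraints and constraints polynomial f^Φ, let R be a matrix representation of (f^Φ)^d, D the diagonal matrix of re-scaling factors √(hist(I)!), and N = D^{-1} R D^{-1}. Then for every x ∈ {±1}^n, |sat_Φ(x) − 1/2| ≤ (1/(2m)) · (‖N‖ · ∑_{I ∈ [n]^{kd/2}} hist(I)!)^{1/d}. -/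
open Matrix

lemma quad_le_spec {ι : Type*} [Fintype ι] [DecidableEq ι] (M : Matrix ι ι ℝ) (w : ι → ℝ) :
    |w ⬝ᵥ M.mulVec w| ≤ specNorm M * ∑ i, w i ^ 2 := by
  set w' : EuclideanSpace ℝ ι := (WithLp.equiv 2 _).symm w with hw'
  have h1 : w ⬝ᵥ M.mulVec w
      = inner (𝕜 := ℝ) w' ((Matrix.toEuclideanCLM (𝕜 := ℝ) M) w') := by
    rw [hw', WithLp.equiv_symm_apply, Matrix.toEuclideanCLM_toLp]
    simp [PiLp.inner_apply, dotProduct, Matrix.toLin'_apply, RCLike.inner_apply, mul_comm]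
  have h2 : ‖w'‖ * ‖w'‖ = ∑ i, w i ^ 2 := by
    have hn : ‖w'‖ = Real.sqrt (∑ i, w i ^ 2) := by
      rw [EuclideanSpace.norm_eq]
      congr 1
      exact Finset.sum_congr rfl fun i _ => by simp [hw', sq, sq_abs, Real.norm_eq_abs]
    rw [hn, Real.mul_self_sqrt (Finset.sum_nonneg fun i _ => sq_nonneg _)]
  calc |w ⬝ᵥ M.mulVec w|
      ≤ ‖w'‖ * ‖(Matrix.toEuclideanCLM (𝕜 := ℝ) M) w'‖ := by
        rw [h1]; exact abs_real_inner_le_norm _ _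
    _ ≤ ‖w'‖ * (specNorm M * ‖w'‖) := by
        gcongr; exact (Matrix.toEuclideanCLM (𝕜 := ℝ) M).le_opNorm w'
    _ = specNorm M * (‖w'‖ * ‖w'‖) := by ring
    _ = _ := by rw [h2]

lemma prod_pm {α : Type*} (s : Finset α) (g : α → ℝ) (h : ∀ t ∈ s, g t = 1 ∨ g t = -1) :
    (∏ t ∈ s, g t) = 1 ∨ (∏ t ∈ s, g t) = -1 := by
  refine Finset.prod_induction g (fun y => y = 1 ∨ y = -1) ?_ (Or.inl rfl) h
  intro p q hp hq
  rcases hp with rfl | rfl <;> rcases hq with rfl | rfl <;> norm_num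

/-- Strong refutation certificate via the re-scaled matrix representation:
for a `k`-XOR instance with `m` constraints and constraints polynomial `f`,
if `R` represents `f^d` and `N = D⁻¹ R D⁻¹` with `D = diag(√(hist(I)!))`, then
`|sat_Φ(x) − 1/2| ≤ (1/(2m)) (‖N‖ ∑_I hist(I)!)^{1/d}` for every `x ∈ {±1}ⁿ`. -/
theorem rescaled_refutation_certificate {n k m d : ℕ} (hk : Even k) (hd : 1 ≤ d) (hm : 0 < m)
    (S : Fin m → Fin k → Fin n) (η : Fin m → ℝ) (hη : ∀ a, η a = 1 ∨ η a = -1)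
    (f : (Fin n → ℝ) → ℝ)
    (hf : ∀ x : Fin n → ℝ, f x = ∑ a, η a * ∏ i, x (S a i))
    (R : Matrix (Fin (k * d / 2) → Fin n) (Fin (k * d / 2) → Fin n) ℝ)
    (hrep : ∀ x : Fin n → ℝ, (f x) ^ d = dotProduct (tensPow x) (R.mulVec (tensPow x)))
    (D : Matrix (Fin (k * d / 2) → Fin n) (Fin (k * d / 2) → Fin n) ℝ)
    (hD : D = Matrix.diagonal (fun I => Real.sqrt (histFact I)))
    (N : Matrix (Fin (k * d / 2) → Fin n) (Fin (k * d / 2) → Fin n) ℝ)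
    (hN : N = D⁻¹ * R * D⁻¹) :
    ∀ x : Fin n → ℝ, (∀ i, x i = 1 ∨ x i = -1) →
      |((Finset.univ.filter (fun a : Fin m => (∏ i, x (S a i)) = η a)).card : ℝ) / m - 1 / 2| ≤
        (1 / (2 * m)) *
          (specNorm N * ∑ I : Fin (k * d / 2) → Fin n, (histFact I : ℝ)) ^ ((1 : ℝ) / d) := by
  intro x hx
  set c := (Finset.univ.filter (fun a : Fin m => (∏ i, x (S a i)) = η a)).card with hc
  set B := specNorm N * ∑ I : Fin (k * d / 2) → Fin n, (histFact I : ℝ) with hB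
  have hhpos : ∀ I : Fin (k * d / 2) → Fin n, 0 < (histFact I : ℝ) := by
    intro I
    have : 0 < histFact I := Finset.prod_pos fun i _ => Nat.factorial_pos _
    exact_mod_cast this
  have hsqrt_pos : ∀ I : Fin (k * d / 2) → Fin n, 0 < Real.sqrt (histFact I) :=
    fun I => Real.sqrt_pos.mpr (hhpos I)
  have hDdet : IsUnit D.det := by
    rw [hD, Matrix.det_diagonal]
    exact (Finset.prod_pos fun I _ => hsqrt_pos I).ne'.isUnit
  have hR : R = D * N * D := by
    rw [hN]
    rw [show D * (D⁻¹ * R * D⁻¹) * D = (D * D⁻¹) * R * (D⁻¹ * D) by noncomm_ring]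
    rw [Matrix.mul_nonsing_inv _ hDdet, Matrix.nonsing_inv_mul _ hDdet, one_mul, mul_one]
  have hv1 : ∀ I : Fin (k * d / 2) → Fin n,
      tensPow x I = 1 ∨ tensPow x I = -1 :=
    fun I => prod_pm _ _ fun t _ => hx (I t)
  have hv2 : ∀ I : Fin (k * d / 2) → Fin n, tensPow x I ^ 2 = 1 := by
    intro I; rcases hv1 I with h | h <;> rw [h] <;> norm_num
  set v := tensPow (q := k * d / 2) x with hv
  set w := D.mulVec v with hw
  have hwI : ∀ I, w I = Real.sqrt (histFact I) * v I := by
    intro I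
    show (D.mulVec v) I = _
    rw [hD, Matrix.mulVec_diagonal]
  have hquad : (f x) ^ d = w ⬝ᵥ N.mulVec w := by
    rw [hrep x, hR, ← hv]
    have hsplit : (D * N * D) *ᵥ v = D *ᵥ (N *ᵥ w) := by
      rw [hw, Matrix.mulVec_mulVec, Matrix.mulVec_mulVec]
    rw [hsplit, Matrix.dotProduct_mulVec]
    congr 1
    ext I
    simp [Matrix.vecMul_diagonal, Matrix.mulVec_diagonal, hD, hw, mul_comm]
  have hww : ∑ I, w I ^ 2 = ∑ I : Fin (k * d / 2) → Fin n, (histFact I : ℝ) := by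
    refine Finset.sum_congr rfl fun I _ => ?_
    rw [hwI I, mul_pow, hv2 I, mul_one, Real.sq_sqrt (hhpos I).le]
  have hkey : |f x| ^ d ≤ B := by
    calc |f x| ^ d = |(f x) ^ d| := (abs_pow _ _).symm
      _ = |w ⬝ᵥ N.mulVec w| := by rw [hquad]
      _ ≤ specNorm N * ∑ I, w I ^ 2 := quad_le_spec N w
      _ = B := by rw [hww, hB]
  have hB0 : 0 ≤ B := le_trans (pow_nonneg (abs_nonneg _) d) hkey
  have hd0 : (d : ℝ) ≠ 0 := Nat.cast_ne_zero.mpr (by omega)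
  have hfb : |f x| ≤ B ^ ((1 : ℝ) / d) := by
    have h1 : (|f x| ^ d) ^ ((1 : ℝ) / d) ≤ B ^ ((1 : ℝ) / d) :=
      Real.rpow_le_rpow (pow_nonneg (abs_nonneg _) d) hkey (by positivity)
    rwa [← Real.rpow_natCast |f x| d, ← Real.rpow_mul (abs_nonneg _),
      mul_one_div, div_self hd0, Real.rpow_one] at h1
  have hcm : c ≤ m := by
    rw [hc]
    exact le_trans (Finset.card_filter_le _ _) (by simp)
  have hfx : f x = 2 * c - m := by
    rw [hf x]
    have hterm : ∀ a : Fin m, η a * ∏ i, x (S a i)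
        = if (∏ i, x (S a i)) = η a then (1 : ℝ) else -1 := by
      intro a
      have hp : (∏ i, x (S a i)) = 1 ∨ (∏ i, x (S a i)) = -1 :=
        prod_pm _ _ fun t _ => hx (S a t)
      rcases hη a with h1 | h1 <;> rcases hp with h2 | h2 <;> norm_num [h1, h2]
    rw [Finset.sum_congr rfl fun a _ => hterm a, Finset.sum_ite, Finset.sum_const,
      Finset.sum_const]
    have hcard : (Finset.univ.filter (fun a : Fin m => ¬ (∏ i, x (S a i)) = η a)).card
        = m - c := by
      rw [Finset.filter_not, Finset.card_sdiff_of_subset (Finset.filter_subset _ _), ← hc,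
        Finset.card_univ, Fintype.card_fin]
    rw [hcard, ← hc, nsmul_eq_mul, nsmul_eq_mul, Nat.cast_sub hcm]
    push_cast
    ring
  have hm0 : (0 : ℝ) < m := Nat.cast_pos.mpr hm
  have hlhs : (c : ℝ) / m - 1 / 2 = f x / (2 * m) := by
    rw [hfx]; field_simp
  rw [hlhs, abs_div, abs_of_pos (by positivity : (0 : ℝ) < 2 * m)]
  calc |f x| / (2 * m) = (1 / (2 * m)) * |f x| := by ring
    _ ≤ (1 / (2 * m)) * B ^ ((1 : ℝ) / d) :=
      mul_le_mul_of_nonneg_left hfb (by positivity)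
end
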